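/- Let s ≤ t and let X ⊆ [t]^k satisfy: for any two distinct x, x' ∈ X and any s-subset S of [t], there exists a position i with x(i) ≠ x'(i) and x(i), x'(i) ∈ S. For each x ∈ X, let d_x be the number of positions i with x(i) ∉ {1,...,s}, and let X_x be the set of all strings obtained from x by arbitrarily replacing each letter outside {1,...,s} by a letter in {1,...,s}. Then the sets X_x for distinct x ∈ X are pairwise disjoint. -/
import Mathlib


theorem stmt_1 (s t k : ℕ) (hst : s ≤ t)
    (X : Finset (Fin k → Fin t))
    (hX : ∀ x ∈ X, ∀ x' ∈ X, x ≠ x' →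
      ∀ S : Finset (Fin t), S.card = s →
        ∃ i : Fin k, x i ≠ x' i ∧ x i ∈ S ∧ x' i ∈ S)
    (Xx : (Fin k → Fin t) → Set (Fin k → Fin t))
    (hXx : ∀ x, Xx x = { y | ∀ i : Fin k,
      ((x i : ℕ) < s → y i = x i) ∧ (¬ (x i : ℕ) < s → (y i : ℕ) < s) }) :
    ∀ x ∈ X, ∀ x' ∈ X, x ≠ x' → Disjoint (Xx x) (Xx x') := by
  intro x hx x' hx' hne
  rw [Set.disjoint_left]
  intro y hy hy'
  rw [hXx x] at hy
  rw [hXx x'] at hy'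
  set S : Finset (Fin t) := (Finset.range s).attachFin
    (fun m hm => lt_of_lt_of_le (Finset.mem_range.mp hm) hst) with hS
  have hcard : S.card = s := by
    rw [hS, Finset.card_attachFin, Finset.card_range]
  obtain ⟨i, hne', hxS, hx'S⟩ := hX x hx x' hx' hne S hcard
  have h1 : (x i : ℕ) < s := Finset.mem_range.mp ((Finset.mem_attachFin _).mp hxS)
  have h2 : (x' i : ℕ) < s := Finset.mem_range.mp ((Finset.mem_attachFin _).mp hx'S)
  exact hne' (((hy i).1 h1).symm.trans ((hy' i).1 h2))
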